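/- Let p, q, r be pairwise coprime integers with 1 < p < q < r. Then p·q·r − p·q − p·r − q·r < p·r if and only if (p,q,r) = (3,4,5), or (p,q,r) = (2,5,7), or (p,q,r) = (2,5,9), or (p = 2 and q = 3). -/
import Mathlib


/-- For pairwise coprime integers `1 < p < q < r`:
`pqr - pq - pr - qr < pr` iff `(p,q,r)` is `(3,4,5)`, `(2,5,7)`, `(2,5,9)`,
or `p = 2` and `q = 3`. -/
theorem stmt_18 (p q r : ℕ) (hp : 1 < p) (hpq : p < q) (hqr : q < r)
    (hcopq : Nat.Coprime p q) (hcopr : Nat.Coprime p r) (hcoqr : Nat.Coprime q r) :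
    ((p * q * r : ℤ) - p * q - p * r - q * r < (p * r : ℤ)) ↔
      ((p, q, r) = (3, 4, 5) ∨ (p, q, r) = (2, 5, 7) ∨ (p, q, r) = (2, 5, 9) ∨
        (p = 2 ∧ q = 3)) := by
  constructor
  · intro h
    have hN : p * q * r < p * q + 2 * (p * r) + q * r := by
      have : ((p * q * r : ℕ) : ℤ) < ((p * q + 2 * (p * r) + q * r : ℕ) : ℤ) := by
        push_cast; linarith
      exact_mod_cast this
    have hA : p * q < q * r := mul_lt_mul'' hpq hqr (by omega) (by omega)
    have hB : p * r < q * r := mul_lt_mul_of_pos_right hpq (by omega)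
    have hqr0 : 0 < q * r := Nat.mul_pos (by omega) (by omega)
    have hp3 : p ≤ 3 := by nlinarith
    interval_cases p
    · -- p = 2
      have hq5 : q ≤ 5 := by nlinarith
      interval_cases q
      · exact Or.inr (Or.inr (Or.inr ⟨rfl, rfl⟩))
      · exact absurd hcopq (by decide)
      · -- q = 5
        have hr9 : r ≤ 9 := by omega
        interval_cases r
        · exact absurd hcopr (by decide)
        · exact Or.inr (Or.inl rfl)
        · exact absurd hcopr (by decide)
        · exact Or.inr (Or.inr (Or.inl rfl))
    · -- p = 3
      have hq4 : q ≤ 4 := by nlinarith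
      interval_cases q
      have hr5 : r ≤ 5 := by omega
      interval_cases r
      exact Or.inl rfl
  · rintro (h | h | h | ⟨h1, h2⟩)
    · simp only [Prod.mk.injEq] at h
      obtain ⟨h1, h2, h3⟩ := h
      subst h1; subst h2; subst h3; norm_num
    · simp only [Prod.mk.injEq] at h
      obtain ⟨h1, h2, h3⟩ := h
      subst h1; subst h2; subst h3; norm_num
    · simp only [Prod.mk.injEq] at h
      obtain ⟨h1, h2, h3⟩ := h
      subst h1; subst h2; subst h3; norm_num
    · subst h1; subst h2
      have hr : (0 : ℤ) ≤ (r : ℤ) := by positivity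
      push_cast
      linarith
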